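/- Let A be an algebra of (S,φ)-type with respect to a presentation (π, P). Then for every pair (ξ, ν) in the congruence L(π) = {(ξ,ν) : π(ξ) = π(ν)} there exists d_{ξ,ν} ∈ k^× such that 𝐛^ξ ≡ d_{ξ,ν} 𝐛^ν modulo F_{φ̃(ξ)-1} A. -/

import Mathlib

/-- Ordered monomial `𝐛^ξ = b₁^{ξ₁} ⋯ bₙ^{ξₙ}` in a (noncommutative) ring. -/
noncomputable def bpow {A : Type} [Ring A] {n : ℕ} (b : Fin n → A) (ξ : Fin n → ℕ) : A :=
  ((List.finRange n).map fun i => b i ^ ξ i).prod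

/-- The canonical map `π : ℕ^n → S`, `ξ ↦ Σ ξ i • s i`. -/
def piMap {S : Type} [AddCommMonoid S] {n : ℕ} (s : Fin n → S) (ξ : Fin n → ℕ) : S :=
  ∑ i, ξ i • s i

/-- The filtration layer `F_l A = span { 𝐛^ξ : φ̃(ξ) ≤ l }`. -/
noncomputable def typeFilt (k : Type) [Field k] {A : Type} [Ring A] [Algebra k A]
    {S : Type} [AddCommMonoid S] {n : ℕ} (s : Fin n → S) (φ : S →+ ℕ)
    (b : Fin n → A) (l : ℕ) : Submodule k A :=
  Submodule.span k {x | ∃ ξ : Fin n → ℕ, φ (piMap s ξ) ≤ l ∧ x = bpow b ξ}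

namespace SPhiAux

def wprod {A : Type} [Ring A] {n : ℕ} (b : Fin n → A) (w : List (Fin n)) : A := (w.map b).prod

def wcount {n : ℕ} (w : List (Fin n)) : Fin n → ℕ := fun i => w.count i

def word {n : ℕ} (ξ : Fin n → ℕ) : List (Fin n) :=
  (List.finRange n).flatMap fun i => List.replicate (ξ i) i

theorem wprod_append {A : Type} [Ring A] {n : ℕ} (b : Fin n → A) (u v : List (Fin n)) :
    wprod b (u ++ v) = wprod b u * wprod b v := by
  simp [wprod]

theorem wprod_cons {A : Type} [Ring A] {n : ℕ} (b : Fin n → A) (i : Fin n) (w : List (Fin n)) :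
    wprod b (i :: w) = b i * wprod b w := by
  simp [wprod]

theorem wprod_word {A : Type} [Ring A] {n : ℕ} (b : Fin n → A) (ξ : Fin n → ℕ) :
    wprod b (word ξ) = bpow b ξ := by
  simp only [wprod, word, bpow, List.flatMap, List.map_flatten, List.map_map,
    List.prod_flatten]
  congr 1
  simp [Function.comp_def, List.map_replicate]

theorem wcount_word {n : ℕ} (ξ : Fin n → ℕ) : wcount (word ξ) = ξ := by
  funext j
  simp only [wcount, word, List.flatMap, List.count_flatten, List.map_map]
  rw [show ((List.finRange n).map ((List.count j) ∘ fun i => List.replicate (ξ i) i))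
      = (List.finRange n).map (fun i => if i = j then ξ i else 0) from by
    apply List.map_congr_left; intro i _
    simp [List.count_replicate]]
  rw [← Fin.sum_univ_def]
  simp

theorem sorted_word {n : ℕ} (ξ : Fin n → ℕ) : (word ξ).Pairwise (· ≤ ·) := by
  unfold word
  rw [List.flatMap, List.pairwise_flatten]
  constructor
  · intro l hl
    simp only [List.mem_map] at hl
    obtain ⟨i, _, rfl⟩ := hl
    exact List.pairwise_replicate.2 (Or.inr le_rfl)
  · rw [List.pairwise_map]
    refine (List.pairwise_lt_finRange n).imp_of_mem ?_
    intro i j _ _ hij a ha b hb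
    rw [List.eq_of_mem_replicate ha, List.eq_of_mem_replicate hb]
    exact le_of_lt hij

theorem sorted_wprod {A : Type} [Ring A] {n : ℕ} (b : Fin n → A) {w : List (Fin n)}
    (hw : w.Pairwise (· ≤ ·)) : wprod b w = bpow b (wcount w) := by
  have : w = word (wcount w) := by
    refine List.Perm.eq_of_pairwise' hw (sorted_word _) ?_
    rw [List.perm_iff_count]
    intro a
    rw [show (word (wcount w)).count a = wcount (word (wcount w)) a from rfl, wcount_word]
    rfl
  conv_lhs => rw [this]
  rw [wprod_word]


theorem piMap_add {S : Type} [AddCommMonoid S] {n : ℕ} (s : Fin n → S) (ξ ν : Fin n → ℕ) :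
    piMap s (ξ + ν) = piMap s ξ + piMap s ν := by
  simp [piMap, add_smul, Finset.sum_add_distrib]

theorem wcount_append {n : ℕ} (u v : List (Fin n)) :
    wcount (u ++ v) = wcount u + wcount v := by
  funext j; simp [wcount, List.count_append]

theorem wcount_cons {n : ℕ} (i : Fin n) (w : List (Fin n)) :
    wcount (i :: w) = wcount w + fun j => if j = i then 1 else 0 := by
  funext j
  simp only [wcount, List.count_cons, Pi.add_apply]
  congr 1
  by_cases h : i = j
  · subst h; simp
  · simp [h, Ne.symm h]

theorem piMap_single {S : Type} [AddCommMonoid S] {n : ℕ} (s : Fin n → S) (i : Fin n) :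
    piMap s (fun j => if j = i then 1 else 0) = s i := by
  simp [piMap, ite_smul]

theorem piMap_wcount_cons {S : Type} [AddCommMonoid S] {n : ℕ} (s : Fin n → S)
    (i : Fin n) (w : List (Fin n)) :
    piMap s (wcount (i :: w)) = piMap s (wcount w) + s i := by
  rw [wcount_cons, piMap_add, piMap_single]

theorem piMap_wcount_append {S : Type} [AddCommMonoid S] {n : ℕ} (s : Fin n → S)
    (u v : List (Fin n)) :
    piMap s (wcount (u ++ v)) = piMap s (wcount u) + piMap s (wcount v) := by
  rw [wcount_append, piMap_add]

/-- a not-sorted list has an adjacent descent -/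
theorem exists_desc {n : ℕ} : ∀ w : List (Fin n), ¬ w.Pairwise (· ≤ ·) →
    ∃ (u : List (Fin n)) (i j : Fin n) (v : List (Fin n)), w = u ++ i :: j :: v ∧ j < i := by
  intro w
  induction w with
  | nil => intro h; exact absurd (List.Pairwise.nil) h
  | cons a t ih =>
    intro h
    match t, ih with
    | [], _ => exact absurd (List.pairwise_singleton _ a) h
    | b :: t', ih =>
      by_cases hab : a ≤ b
      · have : ¬ (b :: t').Pairwise (· ≤ ·) := by
          intro hs
          apply h
          rw [List.pairwise_cons_cons_iff_of_trans] at *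
          exact ⟨hab, hs⟩
        obtain ⟨u, i, j, v, heq, hji⟩ := ih this
        exact ⟨a :: u, i, j, v, by rw [heq]; rfl, hji⟩
      · exact ⟨[], a, b, t', rfl, lt_of_not_ge hab⟩

def inv' {n : ℕ} : List (Fin n) → ℕ
  | [] => 0
  | a :: l => l.countP (fun x => decide (x < a)) + inv' l

theorem inv'_append {n : ℕ} (u l : List (Fin n)) :
    inv' (u ++ l) = inv' u + (u.map fun a => l.countP (fun x => decide (x < a))).sum + inv' l := by
  induction u with
  | nil => simp [inv']
  | cons x u ih =>
    simp only [List.cons_append, inv', List.append_eq, List.countP_append, ih, List.map_cons, List.sum_cons]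
    ring

theorem countP_swap {n : ℕ} (i j : Fin n) (v : List (Fin n)) (p : Fin n → Bool) :
    (i :: j :: v).countP p = (j :: i :: v).countP p := by
  simp only [List.countP_cons]
  ring

theorem inv'_swap_lt {n : ℕ} {i j : Fin n} (hji : j < i) (u v : List (Fin n)) :
    inv' (u ++ j :: i :: v) < inv' (u ++ i :: j :: v) := by
  rw [inv'_append, inv'_append]
  have hcross : ∀ a : Fin n, (j :: i :: v).countP (fun x => decide (x < a))
      = (i :: j :: v).countP (fun x => decide (x < a)) := fun a => countP_swap j i v _
  simp only [hcross]
  have h1 : inv' (j :: i :: v) < inv' (i :: j :: v) := by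
    simp only [inv', List.countP_cons]
    have hji' : decide (j < i) = true := by simpa using hji
    have hij' : decide (i < j) = false := by simpa using (not_lt_of_gt hji)
    rw [hji', hij']
    simp
    omega
  omega


noncomputable def flt (k : Type) [Field k] {A : Type} [Ring A] [Algebra k A]
    {S : Type} [AddCommMonoid S] {n : ℕ} (s : Fin n → S) (φ : S →+ ℕ)
    (b : Fin n → A) (l : ℕ) : Submodule k A :=
  Submodule.span k {x | ∃ ξ : Fin n → ℕ, φ (piMap s ξ) < l ∧ x = bpow b ξ}

section main

variable {k : Type} [Field k] {A : Type} [Ring A] [Algebra k A]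
variable {S : Type} [AddCommMonoid S] {n : ℕ}
variable (s : Fin n → S) (φ : S →+ ℕ) (b : Fin n → A)

theorem flt_mono {l l' : ℕ} (h : l ≤ l') : flt k s φ b l ≤ flt k s φ b l' :=
  Submodule.span_mono (fun x => fun ⟨ξ, h1, h2⟩ => ⟨ξ, lt_of_lt_of_le h1 h, h2⟩)

theorem bpow_mem_flt {ξ : Fin n → ℕ} {l : ℕ} (h : φ (piMap s ξ) < l) :
    bpow b ξ ∈ flt k s φ b l :=
  Submodule.subset_span ⟨ξ, h, rfl⟩

theorem bpow_mem_typeFilt {ξ : Fin n → ℕ} {l : ℕ} (h : φ (piMap s ξ) ≤ l) :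
    bpow b ξ ∈ typeFilt k s φ b l :=
  Submodule.subset_span ⟨ξ, h, rfl⟩

theorem flt_le_typeFilt (l : ℕ) : flt k s φ b l ≤ typeFilt k s φ b (l - 1) :=
  Submodule.span_mono (fun x => fun ⟨ξ, h1, h2⟩ => ⟨ξ, Nat.le_sub_one_of_lt h1, h2⟩)

variable (c : Fin n → Fin n → k) (cc : Fin n → Fin n → ((Fin n → ℕ) →₀ k))

theorem key
    (hc : ∀ i j : Fin n, c i j ≠ 0)
    (hccsupp : ∀ (i j : Fin n) (ξ : Fin n → ℕ), cc i j ξ ≠ 0 →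
      φ (piMap s ξ) < φ (s i + s j))
    (hcomm : ∀ i j : Fin n, i < j →
      b j * b i = c i j • (b i * b j) + (cc i j).sum fun ξ a => a • bpow b ξ) :
    ∀ (D N : ℕ) (w : List (Fin n)), φ (piMap s (wcount w)) ≤ D → inv' w ≤ N →
      ∃ γ : k, γ ≠ 0 ∧
        wprod b w - γ • bpow b (wcount w) ∈ flt k s φ b (φ (piMap s (wcount w))) := by
  intro D
  induction D using Nat.strong_induction_on with
  | _ D ihD =>
  intro N
  induction N using Nat.strong_induction_on with
  | _ N ihN =>
  intro w hwD hwN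
  by_cases hw : w.Pairwise (· ≤ ·)
  · exact ⟨1, one_ne_zero, by
      rw [sorted_wprod b hw, one_smul, sub_self]; exact zero_mem _⟩
  obtain ⟨u, i, j, v, rfl, hji⟩ := exists_desc w hw
  set D₀ := φ (piMap s (wcount (u ++ i :: j :: v))) with hD₀
  -- the swapped word
  have hcount_eq : wcount (u ++ j :: i :: v) = wcount (u ++ i :: j :: v) := by
    funext a
    have h1 := wcount_append u (j :: i :: v)
    have h2 := wcount_append u (i :: j :: v)
    rw [h1, h2]
    simp only [Pi.add_apply]
    have : wcount (j :: i :: v) = wcount (i :: j :: v) := by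
      rw [wcount_cons, wcount_cons, wcount_cons, wcount_cons]
      funext a'
      simp only [Pi.add_apply]
      ring
    rw [this]
  have hdeg_eq : φ (piMap s (wcount (u ++ j :: i :: v))) = D₀ := by rw [hcount_eq]
  -- degree bookkeeping
  have hdeg_split : D₀ = φ (piMap s (wcount u)) + φ (piMap s (wcount v))
      + φ (s j) + φ (s i) := by
    rw [hD₀, piMap_wcount_append, piMap_wcount_cons, piMap_wcount_cons, map_add,
      map_add, map_add]
    ring
  -- any word of strictly smaller degree lies in flt D₀
  have hlow : ∀ z : List (Fin n), φ (piMap s (wcount z)) < D₀ → wprod b z ∈ flt k s φ b D₀ := by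
    intro z hz
    obtain ⟨γ, hγ, hm⟩ := ihD (φ (piMap s (wcount z))) (lt_of_lt_of_le hz hwD) (inv' z) z
      le_rfl le_rfl
    have h1 : bpow b (wcount z) ∈ flt k s φ b D₀ := bpow_mem_flt s φ b hz
    have h2 := add_mem (flt_mono s φ b hz.le hm) (Submodule.smul_mem _ γ h1)
    simpa using h2
  -- error terms
  have hErr : wprod b u * (((cc j i).sum fun ξ a => a • bpow b ξ) * wprod b v)
      ∈ flt k s φ b D₀ := by
    rw [Finsupp.sum, Finset.sum_mul, Finset.mul_sum]
    refine Submodule.sum_mem _ ?_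
    intro ξ hξ
    rw [smul_mul_assoc, mul_smul_comm]
    refine Submodule.smul_mem _ _ ?_
    have hmem : wprod b u * (bpow b ξ * wprod b v) = wprod b (u ++ (word ξ ++ v)) := by
      rw [wprod_append, wprod_append, wprod_word]
    rw [hmem]
    apply hlow
    rw [piMap_wcount_append, piMap_wcount_append, map_add, map_add, wcount_word]
    have hξdeg : φ (piMap s ξ) < φ (s j) + φ (s i) := by
      have := hccsupp j i ξ (Finsupp.mem_support_iff.mp hξ)
      rwa [map_add] at this
    omega
  -- the commutation relation
  have hsplit : wprod b (u ++ i :: j :: v)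
      = c j i • wprod b (u ++ j :: i :: v)
        + wprod b u * (((cc j i).sum fun ξ a => a • bpow b ξ) * wprod b v) := by
    rw [wprod_append, wprod_cons, wprod_cons, wprod_append, wprod_cons, wprod_cons]
    rw [← mul_assoc (b i) (b j), hcomm j i hji]
    rw [add_mul, mul_add, smul_mul_assoc, mul_smul_comm, mul_assoc]
  -- inner induction on inversions
  have hinv : inv' (u ++ j :: i :: v) < N := lt_of_lt_of_le (inv'_swap_lt hji u v) hwN
  obtain ⟨γ', hγ', h'⟩ := ihN (inv' (u ++ j :: i :: v)) hinv (u ++ j :: i :: v)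
    (by rw [hdeg_eq]; exact hwD) le_rfl
  rw [hdeg_eq, hcount_eq] at h'
  refine ⟨c j i * γ', mul_ne_zero (hc j i) hγ', ?_⟩
  have hcomb : wprod b (u ++ i :: j :: v)
      - (c j i * γ') • bpow b (wcount (u ++ i :: j :: v))
      = c j i • (wprod b (u ++ j :: i :: v) - γ' • bpow b (wcount (u ++ i :: j :: v)))
        + wprod b u * (((cc j i).sum fun ξ a => a • bpow b ξ) * wprod b v) := by
    rw [hsplit, smul_sub, smul_smul]
    abel
  rw [hcomb]
  exact add_mem (Submodule.smul_mem _ _ h') hErr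


/-- abbreviation for the conclusion of the key straightening lemma -/
def Hkey (s : Fin n → S) (φ : S →+ ℕ) (b : Fin n → A) (k : Type) [Field k]
    [Algebra k A] : Prop :=
  ∀ w : List (Fin n), ∃ γ : k, γ ≠ 0 ∧
    wprod b w - γ • bpow b (wcount w) ∈ flt k s φ b (φ (piMap s (wcount w)))

theorem wprod_mem_flt (hkey : Hkey s φ b k) {w : List (Fin n)} {l : ℕ}
    (h : φ (piMap s (wcount w)) < l) : wprod b w ∈ flt k s φ b l := by
  obtain ⟨γ, hγ, hm⟩ := hkey w
  have h1 : bpow b (wcount w) ∈ flt k s φ b l := bpow_mem_flt s φ b h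
  have h2 := add_mem (flt_mono s φ b h.le hm) (Submodule.smul_mem _ γ h1)
  simpa using h2

theorem bpow_mul_bpow_mem (hkey : Hkey s φ b k) {ξ ν : Fin n → ℕ} {l : ℕ}
    (h : φ (piMap s ξ) + φ (piMap s ν) < l) : bpow b ξ * bpow b ν ∈ flt k s φ b l := by
  have e : bpow b ξ * bpow b ν = wprod b (word ξ ++ word ν) := by
    rw [wprod_append, wprod_word, wprod_word]
  rw [e]
  apply wprod_mem_flt s φ b hkey
  rwa [wcount_append, wcount_word, wcount_word, piMap_add, map_add]

theorem mul_flt_typeFilt (hkey : Hkey s φ b k) {p q : ℕ} {x y : A}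
    (hx : x ∈ flt k s φ b p) (hy : y ∈ typeFilt k s φ b q) :
    x * y ∈ flt k s φ b (p + q) := by
  have hle : flt k s φ b p * typeFilt k s φ b q ≤ flt k s φ b (p + q) := by
    rw [flt, typeFilt, Submodule.span_mul_span, Submodule.span_le]
    rintro z ⟨x1, ⟨ξ, hξ, rfl⟩, x2, ⟨ν, hν, rfl⟩, rfl⟩
    exact bpow_mul_bpow_mem s φ b hkey (by omega)
  exact hle (Submodule.mul_mem_mul hx hy)

theorem mul_typeFilt_flt (hkey : Hkey s φ b k) {p q : ℕ} {x y : A}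
    (hx : x ∈ typeFilt k s φ b p) (hy : y ∈ flt k s φ b q) :
    x * y ∈ flt k s φ b (p + q) := by
  have hle : typeFilt k s φ b p * flt k s φ b q ≤ flt k s φ b (p + q) := by
    rw [flt, typeFilt, Submodule.span_mul_span, Submodule.span_le]
    rintro z ⟨x1, ⟨ξ, hξ, rfl⟩, x2, ⟨ν, hν, rfl⟩, rfl⟩
    exact bpow_mul_bpow_mem s φ b hkey (by omega)
  exact hle (Submodule.mul_mem_mul hx hy)

theorem mul_straighten (hkey : Hkey s φ b k) (ξ ν : Fin n → ℕ) :
    ∃ γ : k, γ ≠ 0 ∧ bpow b ξ * bpow b ν - γ • bpow b (ξ + ν)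
      ∈ flt k s φ b (φ (piMap s ξ) + φ (piMap s ν)) := by
  obtain ⟨γ, hγ, hm⟩ := hkey (word ξ ++ word ν)
  refine ⟨γ, hγ, ?_⟩
  rw [wprod_append, wprod_word, wprod_word, wcount_append, wcount_word, wcount_word,
    piMap_add, map_add] at hm
  exact hm

end main
end SPhiAux

/-- Let `A` be an algebra of `(S,φ)`-type with respect to a
presentation `(π, P)`. Then for every pair `(ξ, ν)` in the congruence
`L(π) = {(ξ,ν) : π ξ = π ν}` there exists `γ ∈ k^×` such that
`𝐛^ξ ≡ γ 𝐛^ν` modulo `F_{φ̃(ξ)-1} A`. -/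
theorem s_phi_type_straightening
    (k : Type) [Field k] (A : Type) [Ring A] [Algebra k A]
    (S : Type) [AddCancelCommMonoid S]
    (n m : ℕ) (s : Fin n → S)
    (hsurj : Function.Surjective (piMap s))
    (hs : Set.range s = {t : S | t ≠ 0 ∧ ∀ x y : S, t = x + y → x = 0 ∨ y = 0})
    (φ : S →+ ℕ) (hφ : ∀ t : S, φ t = 0 → t = 0)
    (P : Fin m → (Fin n → ℕ) × (Fin n → ℕ))
    (hP : ∀ ξ ν : Fin n → ℕ,
      addConGen (fun a b => ∃ i : Fin m, a = (P i).1 ∧ b = (P i).2) ξ ν ↔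
        piMap s ξ = piMap s ν)
    (b : Fin n → A) (hgen : Algebra.adjoin k (Set.range b) = ⊤)
    (c : Fin n → Fin n → k) (hc : ∀ i j : Fin n, c i j ≠ 0)
    (cc : Fin n → Fin n → ((Fin n → ℕ) →₀ k))
    (hccsupp : ∀ (i j : Fin n) (ξ : Fin n → ℕ), cc i j ξ ≠ 0 →
      φ (piMap s ξ) < φ (s i + s j))
    (hcomm : ∀ i j : Fin n, i < j →
      b j * b i = c i j • (b i * b j) + (cc i j).sum fun ξ a => a • bpow b ξ)
    (d : Fin m → k) (hd : ∀ i, d i ≠ 0)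
    (dd : Fin m → ((Fin n → ℕ) →₀ k))
    (hddsupp : ∀ (i : Fin m) (ξ : Fin n → ℕ), dd i ξ ≠ 0 →
      φ (piMap s ξ) < φ (piMap s (P i).1))
    (hstr : ∀ i : Fin m,
      bpow b (P i).2 = d i • bpow b (P i).1 + (dd i).sum fun ξ a => a • bpow b ξ) :
    ∀ ξ ν : Fin n → ℕ, piMap s ξ = piMap s ν → ∃ γ : k, γ ≠ 0 ∧
      bpow b ξ - γ • bpow b ν ∈ typeFilt k s φ b (φ (piMap s ξ) - 1) := by
  classical
  set r := fun a b_1 => ∃ i : Fin m, a = (P i).1 ∧ b_1 = (P i).2 with hr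
  have hkey : SPhiAux.Hkey s φ b k := fun w =>
    SPhiAux.key s φ b c cc hc hccsupp hcomm (φ (piMap s (SPhiAux.wcount w)))
      (SPhiAux.inv' w) w le_rfl le_rfl
  -- the congruence T
  set Trel : (Fin n → ℕ) → (Fin n → ℕ) → Prop := fun ξ ν =>
    piMap s ξ = piMap s ν ∧ ∃ γ : k, γ ≠ 0 ∧
      bpow b ξ - γ • bpow b ν ∈ SPhiAux.flt k s φ b (φ (piMap s ξ)) with hTrel
  have hrefl : ∀ ξ, Trel ξ ξ := by
    intro ξ
    exact ⟨rfl, 1, one_ne_zero, by rw [one_smul, sub_self]; exact zero_mem _⟩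
  have hsymm : ∀ {ξ ν}, Trel ξ ν → Trel ν ξ := by
    rintro ξ ν ⟨hπ, γ, hγ, hm⟩
    refine ⟨hπ.symm, γ⁻¹, inv_ne_zero hγ, ?_⟩
    have e : bpow b ν - γ⁻¹ • bpow b ξ = (-γ⁻¹) • (bpow b ξ - γ • bpow b ν) := by
      match_scalars <;> field_simp
    rw [e, ← hπ]
    exact Submodule.smul_mem _ _ hm
  have htrans : ∀ {ξ ν ρ}, Trel ξ ν → Trel ν ρ → Trel ξ ρ := by
    rintro ξ ν ρ ⟨hπ, γ, hγ, hm⟩ ⟨hπ', γ', hγ', hm'⟩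
    refine ⟨hπ.trans hπ', γ * γ', mul_ne_zero hγ hγ', ?_⟩
    have e : bpow b ξ - (γ * γ') • bpow b ρ
        = (bpow b ξ - γ • bpow b ν) + γ • (bpow b ν - γ' • bpow b ρ) := by
      module
    rw [e]
    refine add_mem hm (Submodule.smul_mem _ _ ?_)
    rw [hπ]
    exact hm'
  have hadd : ∀ {w x y z}, Trel w x → Trel y z → Trel (w + y) (x + z) := by
    rintro ξ ν ξ' ν' ⟨hπ, γ, hγ, hm⟩ ⟨hπ', γ', hγ', hm'⟩
    have hπadd : piMap s (ξ + ξ') = piMap s (ν + ν') := by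
      rw [SPhiAux.piMap_add, SPhiAux.piMap_add, hπ, hπ']
    refine ⟨hπadd, ?_⟩
    set p := φ (piMap s ξ) with hp
    set q := φ (piMap s ξ') with hq
    have hdeg : φ (piMap s (ξ + ξ')) = p + q := by rw [SPhiAux.piMap_add, map_add]
    have hdeg' : φ (piMap s (ν + ν')) = p + q := by rw [← hπadd, hdeg]
    obtain ⟨γ₀, hγ₀, h₀⟩ := SPhiAux.mul_straighten s φ b hkey ξ ξ'
    obtain ⟨γ₁, hγ₁, h₁⟩ := SPhiAux.mul_straighten s φ b hkey ν ν'
    rw [← hp, ← hq] at h₀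
    rw [← hπ, ← hπ', ← hp, ← hq] at h₁
    -- cross terms
    have hm1 : bpow b ξ * bpow b ξ' - (γ * γ') • (bpow b ν * bpow b ν')
        ∈ SPhiAux.flt k s φ b (p + q) := by
      have e : bpow b ξ * bpow b ξ' - (γ * γ') • (bpow b ν * bpow b ν')
          = (bpow b ξ - γ • bpow b ν) * bpow b ξ'
            + γ • (bpow b ν * (bpow b ξ' - γ' • bpow b ν')) := by
        rw [sub_mul, mul_sub, smul_sub, mul_smul_comm, smul_smul, smul_mul_assoc]
        abel
      rw [e]
      refine add_mem ?_ (Submodule.smul_mem _ _ ?_)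
      · exact SPhiAux.mul_flt_typeFilt s φ b hkey hm
          (SPhiAux.bpow_mem_typeFilt s φ b (le_of_eq hq.symm))
      · exact SPhiAux.mul_typeFilt_flt s φ b hkey
          (SPhiAux.bpow_mem_typeFilt s φ b (le_of_eq (by rw [← hπ, hp])))
          hm'
    set δ := γ₀⁻¹ * (γ * γ' * γ₁) with hδ
    have hδne : δ ≠ 0 := by
      apply mul_ne_zero (inv_ne_zero hγ₀)
      exact mul_ne_zero (mul_ne_zero hγ hγ') hγ₁
    refine ⟨δ, hδne, ?_⟩
    rw [hdeg]
    have hγ₀δ : γ₀ * δ = γ * γ' * γ₁ := by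
      rw [hδ, ← mul_assoc, mul_inv_cancel₀ hγ₀, one_mul]
    have hXmem : γ₀ • (bpow b (ξ + ξ') - δ • bpow b (ν + ν'))
        ∈ SPhiAux.flt k s φ b (p + q) := by
      have e : γ₀ • (bpow b (ξ + ξ') - δ • bpow b (ν + ν'))
          = (bpow b ξ * bpow b ξ' - (γ * γ') • (bpow b ν * bpow b ν'))
            - (bpow b ξ * bpow b ξ' - γ₀ • bpow b (ξ + ξ'))
            + (γ * γ') • (bpow b ν * bpow b ν' - γ₁ • bpow b (ν + ν')) := by
        rw [smul_sub, smul_smul, hγ₀δ]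
        module
      rw [e]
      exact add_mem (sub_mem hm1 h₀) (Submodule.smul_mem _ _ h₁)
    have := Submodule.smul_mem (SPhiAux.flt k s φ b (p + q)) γ₀⁻¹ hXmem
    rwa [inv_smul_smul₀ hγ₀] at this
  set T : AddCon (Fin n → ℕ) :=
    ⟨⟨Trel, ⟨hrefl, fun h => hsymm h, fun h1 h2 => htrans h1 h2⟩⟩, fun h1 h2 => hadd h1 h2⟩
    with hT
  -- generators satisfy T
  have hgenT : ∀ x y, r x y → T x y := by
    rintro x y ⟨i, rfl, rfl⟩
    have hπi : piMap s (P i).1 = piMap s (P i).2 := by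
      apply (hP (P i).1 (P i).2).mp
      exact AddConGen.Rel.of _ _ ⟨i, rfl, rfl⟩
    refine ⟨hπi, (d i)⁻¹, inv_ne_zero (hd i), ?_⟩
    have e : bpow b (P i).1 - (d i)⁻¹ • bpow b (P i).2
        = (-(d i)⁻¹) • ((dd i).sum fun ξ a => a • bpow b ξ) := by
      rw [hstr i, smul_add, smul_smul, inv_mul_cancel₀ (hd i), one_smul]
      rw [neg_smul]
      abel
    rw [e]
    refine Submodule.smul_mem _ _ ?_
    rw [Finsupp.sum]
    refine Submodule.sum_mem _ ?_
    intro ξ hξ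
    exact Submodule.smul_mem _ _
      (SPhiAux.bpow_mem_flt s φ b (hddsupp i ξ (Finsupp.mem_support_iff.mp hξ)))
  have hle : addConGen r ≤ T := AddCon.addConGen_le.2 hgenT
  intro ξ ν hπ
  have hT' : T ξ ν := hle ((hP ξ ν).mpr hπ)
  obtain ⟨_, γ, hγ, hm⟩ := hT'
  exact ⟨γ, hγ, SPhiAux.flt_le_typeFilt s φ b _ hm⟩
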